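/- Suppose real numbers d₀ ≥ d₁ ≥ … ≥ d_κ > 0 satisfy d_{r+1}/d_r ≤ 1 - ε·τ_{r+1}/(8(s+τ_{r+1})·ln τ_{r+1}) for all r, where τ_r ≤ c·s for every r in an index set I ⊆ [κ], with d₀ ≤ ½ and d_r > ε/η² for all r ≤ κ. Then Σ_{i∈I} τᵢ ≤ (8(c+1)/ε)·s·ln(cs)·ln(η²/(2ε)). -/

import Mathlib

/-- If d₀ ≥ d₁ ≥ … ≥ d_κ > 0 satisfy the contraction
d_{r+1}/d_r ≤ 1 - ε·τ_{r+1}/(8(s+τ_{r+1})·ln τ_{r+1}), with τᵢ ≤ c·s on an index set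
I ⊆ [κ], d₀ ≤ ½, and d_r > ε/η² for all r ≤ κ, then
Σ_{i∈I} τᵢ ≤ (8(c+1)/ε)·s·ln(cs)·ln(η²/(2ε)). -/
theorem stmt16 (κ : ℕ) (d : ℕ → ℝ) (τ : ℕ → ℕ)
    (ε η s c : ℝ) (hε : 0 < ε) (hε1 : ε < 1) (hη : 0 < η)
    (hs : 2 ≤ s) (hc : 1 ≤ c)
    (hτ2 : ∀ r, 2 ≤ τ r)
    (hmono : ∀ r, r + 1 ≤ κ → d (r + 1) ≤ d r)
    (hpos : ∀ r, r ≤ κ → 0 < d r)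
    (hcontract : ∀ r, r + 1 ≤ κ →
      d (r + 1) / d r ≤ 1 - ε * (τ (r + 1) : ℝ) /
        (8 * (s + (τ (r + 1) : ℝ)) * Real.log (τ (r + 1) : ℝ)))
    (I : Finset ℕ) (hI : I ⊆ Finset.Icc 1 κ)
    (hτI : ∀ i ∈ I, (τ i : ℝ) ≤ c * s)
    (hd0 : d 0 ≤ 1 / 2)
    (hgap : ∀ r, r ≤ κ → d r > ε / η ^ 2) :
    ∑ i ∈ I, (τ i : ℝ) ≤ (8 * (c + 1) / ε) * s * Real.log (c * s)
      * Real.log (η ^ 2 / (2 * ε)) := by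
  set x : ℕ → ℝ := fun r => ε * (τ r : ℝ) /
      (8 * (s + (τ r : ℝ)) * Real.log (τ r : ℝ)) with hxdef
  have hτ2' : ∀ r, (2:ℝ) ≤ (τ r : ℝ) := fun r => by exact_mod_cast hτ2 r
  have hlogpos : ∀ r, 0 < Real.log (τ r : ℝ) := fun r =>
    Real.log_pos (by linarith [hτ2' r])
  have hDpos : ∀ r, 0 < 8 * (s + (τ r : ℝ)) * Real.log (τ r : ℝ) := fun r => by
    have := hτ2' r; have := hlogpos r; nlinarith
  have hxpos : ∀ r, 0 < x r := fun r =>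
    div_pos (mul_pos hε (by linarith [hτ2' r])) (hDpos r)
  -- key inductive bound
  have key : ∀ r, r ≤ κ → d r ≤ d 0 * Real.exp (-(∑ j ∈ Finset.Icc 1 r, x j)) := by
    intro r
    induction r with
    | zero => intro _; simp
    | succ n ih =>
      intro h
      have hn : n ≤ κ := by omega
      have hdn := hpos n hn
      have hd1 := hpos (n+1) h
      have h1 : d (n+1) ≤ d n * (1 - x (n+1)) := by
        have hcon := hcontract n h
        calc d (n+1) = d (n+1) / d n * d n := by field_simp
          _ ≤ (1 - x (n+1)) * d n := mul_le_mul_of_nonneg_right hcon hdn.le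
          _ = d n * (1 - x (n+1)) := mul_comm _ _
      have h2 : (0:ℝ) < 1 - x (n+1) := by nlinarith
      have h3 : 1 - x (n+1) ≤ Real.exp (-(x (n+1))) := by
        have := Real.add_one_le_exp (-(x (n+1))); linarith
      have hd0pos : 0 < d 0 := hpos 0 (by omega)
      have sumstep : ∑ j ∈ Finset.Icc 1 (n+1), x j
          = (∑ j ∈ Finset.Icc 1 n, x j) + x (n+1) := by
        rw [Finset.sum_Icc_succ_top (by omega)]
      calc d (n+1) ≤ d n * (1 - x (n+1)) := h1
        _ ≤ (d 0 * Real.exp (-(∑ j ∈ Finset.Icc 1 n, x j))) * (1 - x (n+1)) :=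
            mul_le_mul_of_nonneg_right (ih hn) h2.le
        _ ≤ (d 0 * Real.exp (-(∑ j ∈ Finset.Icc 1 n, x j))) * Real.exp (-(x (n+1))) := by
            apply mul_le_mul_of_nonneg_left h3; positivity
        _ = d 0 * Real.exp (-(∑ j ∈ Finset.Icc 1 (n+1), x j)) := by
            rw [sumstep, neg_add, Real.exp_add]; ring
  set S := ∑ j ∈ Finset.Icc 1 κ, x j with hSdef
  have hexp : ε / η ^ 2 < (1/2) * Real.exp (-S) := by
    have h1 := hgap κ le_rfl
    have h2 := key κ le_rfl
    have h3 : d 0 * Real.exp (-S) ≤ (1/2) * Real.exp (-S) :=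
      mul_le_mul_of_nonneg_right hd0 (Real.exp_pos _).le
    linarith
  have hSlt : S < Real.log (η ^ 2 / (2 * ε)) := by
    have hq : (0:ℝ) < 2 * ε / η ^ 2 := by positivity
    have h4 : 2 * ε / η ^ 2 < Real.exp (-S) := by
      have he : 2 * ε / η ^ 2 = 2 * (ε / η ^ 2) := by ring
      linarith [he]
    have h5 : Real.log (2 * ε / η ^ 2) < -S := by
      have := Real.log_lt_log hq h4
      rwa [Real.log_exp] at this
    have h6 : Real.log (η ^ 2 / (2 * ε)) = - Real.log (2 * ε / η ^ 2) := by
      rw [← Real.log_inv]; congr 1; field_simp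
    linarith [h5, h6]
  have hSI : ∑ i ∈ I, x i ≤ S :=
    Finset.sum_le_sum_of_subset_of_nonneg hI (fun i _ _ => (hxpos i).le)
  have hcs2 : (2:ℝ) ≤ c * s := by nlinarith
  have hlogcs : 0 < Real.log (c * s) := Real.log_pos (by linarith)
  set K : ℝ := 8 * (c + 1) * s * Real.log (c * s) / ε with hKdef
  have hKpos : 0 < K := by
    apply div_pos _ hε; positivity
  have hτK : ∀ i ∈ I, (τ i : ℝ) ≤ K * x i := by
    intro i hi
    have hτle := hτI i hi
    have hD'pos : 0 < 8 * (c + 1) * s * Real.log (c * s) := by positivity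
    have hDle : 8 * (s + (τ i : ℝ)) * Real.log (τ i : ℝ)
        ≤ 8 * (c + 1) * s * Real.log (c * s) := by
      have hlt : Real.log (τ i : ℝ) ≤ Real.log (c * s) :=
        Real.log_le_log (by linarith [hτ2' i]) hτle
      have h7 : 8 * (s + (τ i : ℝ)) ≤ 8 * (c + 1) * s := by nlinarith
      have := hlogpos i
      nlinarith
    have h1 : ε * (τ i : ℝ) / (8 * (c + 1) * s * Real.log (c * s)) ≤ x i := by
      apply div_le_div_of_nonneg_left _ (hDpos i) hDle
      have := hτ2' i; nlinarith
    have h2 : K * (ε * (τ i : ℝ) / (8 * (c + 1) * s * Real.log (c * s))) = (τ i : ℝ) := by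
      rw [hKdef]; field_simp
    calc (τ i : ℝ) = K * (ε * (τ i : ℝ) / (8 * (c + 1) * s * Real.log (c * s))) := h2.symm
      _ ≤ K * x i := mul_le_mul_of_nonneg_left h1 hKpos.le
  calc ∑ i ∈ I, (τ i : ℝ) ≤ ∑ i ∈ I, K * x i := Finset.sum_le_sum hτK
    _ = K * ∑ i ∈ I, x i := by rw [Finset.mul_sum]
    _ ≤ K * S := mul_le_mul_of_nonneg_left hSI hKpos.le
    _ ≤ K * Real.log (η ^ 2 / (2 * ε)) := mul_le_mul_of_nonneg_left hSlt.le hKpos.le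
    _ = (8 * (c + 1) / ε) * s * Real.log (c * s) * Real.log (η ^ 2 / (2 * ε)) := by
        rw [hKdef]; ring
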